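/- Let A ∈ ℝ^{n×N} have full row rank and let x ∈ ℝ^N be s-sparse with Ax = b. Let δ_{2s} be a 2s-th order RIP constant and γ_{3s} a (3s)-th order P-RIP constant for A with δ_{2s} + √2 γ_{3s} < 1. Suppose {x^k}, {u^k}, {T_k} follow the NST+HT+FB iteration with A x^0 = b (and each A_{T_k}* A_{T_k} invertible). Then the sequence {u^k} reaches x in finitely many steps: there exists K such that u^k = x for all k ≥ K. -/

import Mathlib

open Matrix Finset Filter Topology

/-- Euclidean norm of a vector. -/
noncomputable def euclNorm {k : ℕ} (x : Fin k → ℝ) : ℝ := Real.sqrt (∑ i, x i ^ 2)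

/-- `x` has at most `s` nonzero entries. -/
def IsSparse {k : ℕ} (s : ℕ) (x : Fin k → ℝ) : Prop :=
  (Finset.univ.filter fun i => x i ≠ 0).card ≤ s

/-- Spectral norm (ℓ²-operator norm) of a matrix. -/
noncomputable def specNorm {m k : Type*} [Fintype m] [Fintype k] [DecidableEq k]
    (M : Matrix m k ℝ) : ℝ :=
  ‖LinearMap.toContinuousLinearMap (Matrix.toEuclideanLin M)‖

/-- The positive semidefinite square root of a positive semidefinite matrix
(the definition of `Matrix.PosSemidef.sqrt` in the older Mathlib, which is gone). -/
noncomputable def psdSqrt {m : Type*} [Fintype m] [DecidableEq m] {M : Matrix m m ℝ}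
    (hM : M.PosSemidef) : Matrix m m ℝ :=
  (hM.1.eigenvectorUnitary : Matrix m m ℝ) *
    diagonal (fun i => Real.sqrt (hM.1.eigenvalues i)) *
    (star hM.1.eigenvectorUnitary : Matrix m m ℝ)

/-- `cols A T` is the submatrix of `A` consisting of the columns indexed by `T`. -/
def cols {n N : ℕ} (A : Matrix (Fin n) (Fin N) ℝ) (T : Finset (Fin N)) :
    Matrix (Fin n) {i : Fin N // i ∈ T} ℝ := Matrix.of fun r c => A r c.1

/-- `subv x T` is the subvector of `x` consisting of the entries indexed by `T`. -/
def subv {N : ℕ} (x : Fin N → ℝ) (T : Finset (Fin N)) : {i : Fin N // i ∈ T} → ℝ :=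
  fun i => x i.1

/-- The feedback term `(A_T* A_T)⁻¹ A_T* A_{Tᶜ} x_{Tᶜ}`. -/
noncomputable def fb {n N : ℕ} (A : Matrix (Fin n) (Fin N) ℝ) (T : Finset (Fin N))
    (x : Fin N → ℝ) : {i : Fin N // i ∈ T} → ℝ :=
  ((cols A T)ᵀ * cols A T)⁻¹ *ᵥ ((cols A T)ᵀ *ᵥ (cols A Tᶜ *ᵥ subv x Tᶜ))

/-! ### Auxiliary machinery -/

namespace S8

noncomputable def n2 {k : ℕ} (x : Fin k → ℝ) : ℝ := ∑ i, x i ^ 2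
noncomputable def dp {k : ℕ} (x y : Fin k → ℝ) : ℝ := ∑ i, x i * y i

lemma n2_nonneg {k : ℕ} (x : Fin k → ℝ) : 0 ≤ n2 x :=
  Finset.sum_nonneg fun _ _ => sq_nonneg _

lemma enorm_sq {k : ℕ} (x : Fin k → ℝ) : euclNorm x ^ 2 = n2 x :=
  Real.sq_sqrt (n2_nonneg x)

lemma n2_eq_zero {k : ℕ} {x : Fin k → ℝ} (h : n2 x = 0) : ∀ i, x i = 0 := by
  intro i
  have := (Finset.sum_eq_zero_iff_of_nonneg (fun i _ => sq_nonneg (x i))).mp h i (mem_univ i)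
  exact pow_eq_zero_iff (by norm_num) |>.mp this

lemma dp_mulVec {m k : ℕ} (M : Matrix (Fin m) (Fin k) ℝ) (x : Fin k → ℝ) (y : Fin m → ℝ) :
    dp (M *ᵥ x) y = dp x (Mᵀ *ᵥ y) := by
  simp only [dp, mulVec, dotProduct, transpose_apply, Finset.sum_mul, Finset.mul_sum]
  rw [Finset.sum_comm]
  congr 1; ext i; congr 1; ext j; ring

lemma dp_comm {k : ℕ} (x y : Fin k → ℝ) : dp x y = dp y x := by
  unfold dp; congr 1; ext i; ring

lemma dp_self {k : ℕ} (x : Fin k → ℝ) : dp x x = n2 x := by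
  unfold dp n2; congr 1; ext i; ring

lemma n2_add_of_disj {k : ℕ} {x y : Fin k → ℝ} (h : ∀ i, x i = 0 ∨ y i = 0) :
    n2 (fun i => x i + y i) = n2 x + n2 y := by
  unfold n2
  rw [← Finset.sum_add_distrib]
  congr 1; ext i
  rcases h i with h' | h' <;> simp [h']

lemma n2_sub_of_disj {k : ℕ} {x y : Fin k → ℝ} (h : ∀ i, x i = 0 ∨ y i = 0) :
    n2 (fun i => x i - y i) = n2 x + n2 y := by
  have h2 : ∀ i, x i = 0 ∨ (fun i => -y i) i = 0 := by
    intro i; rcases h i with h'|h' <;> simp [h']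
  have := n2_add_of_disj h2
  simp only [← sub_eq_add_neg] at this
  rw [this]; congr 1; simp [n2]

lemma mulVec_smul' {m k : ℕ} (M : Matrix (Fin m) (Fin k) ℝ) (c : ℝ) (x : Fin k → ℝ) :
    M *ᵥ (fun i => c * x i) = fun j => c * (M *ᵥ x) j := by
  ext j; simp only [mulVec, dotProduct, Finset.mul_sum]; congr 1; ext i; ring

lemma dp_ident {k : ℕ} (u v : Fin k → ℝ) :
    dp u v = (n2 (fun i => u i + v i) - n2 (fun i => u i - v i)) / 4 := by
  unfold dp n2
  rw [← Finset.sum_sub_distrib]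
  rw [eq_div_iff (by norm_num : (4:ℝ) ≠ 0), Finset.sum_mul]
  congr 1; ext i; ring

lemma cs {k : ℕ} (x y : Fin k → ℝ) : dp x y ≤ Real.sqrt (n2 x) * Real.sqrt (n2 y) := by
  have h := sum_mul_sq_le_sq_mul_sq univ x y
  calc dp x y ≤ |dp x y| := le_abs_self _
    _ = Real.sqrt ((dp x y)^2) := (Real.sqrt_sq_eq_abs _).symm
    _ ≤ Real.sqrt (n2 x * n2 y) := Real.sqrt_le_sqrt h
    _ = Real.sqrt (n2 x) * Real.sqrt (n2 y) := Real.sqrt_mul (n2_nonneg x) _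

lemma sparse_of_subset {k s : ℕ} {x y : Fin k → ℝ} (h : ∀ i, x i ≠ 0 → y i ≠ 0)
    (hy : IsSparse s y) : IsSparse s x := by
  refine le_trans (Finset.card_le_card ?_) hy
  intro i hi
  simp only [mem_filter, mem_univ, true_and] at hi ⊢
  exact h i hi

/-! #### RIP cross-correlation lemma -/

lemma cross0 {n N s2 : ℕ} (A : Matrix (Fin n) (Fin N) ℝ) (δ : ℝ)
    (hRIP : ∀ z : Fin N → ℝ, IsSparse s2 z →
      (1 - δ) * n2 z ≤ n2 (A *ᵥ z) ∧ n2 (A *ᵥ z) ≤ (1 + δ) * n2 z)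
    (y z : Fin N → ℝ) (hd : ∀ i, y i = 0 ∨ z i = 0)
    (hcard : ((univ.filter fun i => y i ≠ 0) ∪ (univ.filter fun i => z i ≠ 0)).card ≤ s2) :
    dp (A *ᵥ y) (A *ᵥ z) ≤ δ * (n2 y + n2 z) / 2 := by
  have hsub : ∀ (c d : ℝ), IsSparse s2 (fun i => c * y i + d * z i) := by
    intro c d
    refine le_trans (Finset.card_le_card ?_) hcard
    intro i hi
    simp only [mem_filter, mem_univ, true_and, mem_union] at hi ⊢
    by_contra hcon
    push_neg at hcon
    simp [hcon.1, hcon.2] at hi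
  have hAadd : A *ᵥ (fun i => y i + z i) = fun j => (A *ᵥ y) j + (A *ᵥ z) j :=
    mulVec_add A y z
  have hAsub : A *ᵥ (fun i => y i - z i) = fun j => (A *ᵥ y) j - (A *ᵥ z) j :=
    mulVec_sub A y z
  have h1 := (hRIP _ (by simpa using hsub 1 1)).2
  have h2 := (hRIP _ (by simpa using hsub 1 (-1))).1
  simp only [one_mul, neg_one_mul, ← sub_eq_add_neg] at h1 h2
  rw [hAadd] at h1
  rw [hAsub] at h2
  rw [n2_add_of_disj hd] at h1
  rw [n2_sub_of_disj hd] at h2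
  rw [dp_ident]
  have := n2_add_of_disj hd
  linarith

lemma cross {n N s2 : ℕ} (A : Matrix (Fin n) (Fin N) ℝ) (δ : ℝ) (hδ : 0 ≤ δ)
    (hRIP : ∀ z : Fin N → ℝ, IsSparse s2 z →
      (1 - δ) * n2 z ≤ n2 (A *ᵥ z) ∧ n2 (A *ᵥ z) ≤ (1 + δ) * n2 z)
    (y z : Fin N → ℝ) (hd : ∀ i, y i = 0 ∨ z i = 0)
    (hcard : ((univ.filter fun i => y i ≠ 0) ∪ (univ.filter fun i => z i ≠ 0)).card ≤ s2) :
    dp (A *ᵥ y) (A *ᵥ z) ≤ δ * (Real.sqrt (n2 y) * Real.sqrt (n2 z)) := by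
  rcases eq_or_lt_of_le (n2_nonneg y) with hy | hy
  · have : y = 0 := funext (n2_eq_zero hy.symm)
    subst this
    simp only [mulVec_zero]
    have : dp (0 : Fin n → ℝ) (A *ᵥ z) = 0 := by simp [dp]
    rw [this]
    positivity
  rcases eq_or_lt_of_le (n2_nonneg z) with hz | hz
  · have : z = 0 := funext (n2_eq_zero hz.symm)
    subst this
    simp only [mulVec_zero]
    have : dp (A *ᵥ y) (0 : Fin n → ℝ) = 0 := by simp [dp]
    rw [this]
    positivity
  set p := Real.sqrt (n2 y) with hp
  set q := Real.sqrt (n2 z) with hq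
  have hp0 : 0 < p := Real.sqrt_pos.mpr hy
  have hq0 : 0 < q := Real.sqrt_pos.mpr hz
  set c : ℝ := Real.sqrt q / Real.sqrt p with hc
  have hc0 : 0 < c := div_pos (Real.sqrt_pos.mpr hq0) (Real.sqrt_pos.mpr hp0)
  have hc2 : c^2 = q / p := by
    rw [hc, div_pow, Real.sq_sqrt hq0.le, Real.sq_sqrt hp0.le]
  set y' : Fin N → ℝ := fun i => c * y i with hy'
  set z' : Fin N → ℝ := fun i => c⁻¹ * z i with hz'
  have hd' : ∀ i, y' i = 0 ∨ z' i = 0 := by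
    intro i; rcases hd i with h|h <;> simp [hy', hz', h]
  have hcard' : ((univ.filter fun i => y' i ≠ 0) ∪ (univ.filter fun i => z' i ≠ 0)).card ≤ s2 := by
    refine le_trans (Finset.card_le_card ?_) hcard
    intro i hi
    simp only [mem_filter, mem_univ, true_and, mem_union, hy', hz'] at hi ⊢
    rcases hi with h|h
    · exact Or.inl (by intro h0; exact h (by simp [h0]))
    · exact Or.inr (by intro h0; exact h (by simp [h0]))
  have hbase := cross0 A δ hRIP y' z' hd' hcard'
  have hn2y' : n2 y' = p * q := by
    have h1 : n2 y' = c^2 * n2 y := by simp [hy', n2, Finset.mul_sum, mul_pow]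
    rw [h1, hc2]
    have h2 : n2 y = p^2 := (Real.sq_sqrt (n2_nonneg y)).symm
    rw [h2]; field_simp
  have hn2z' : n2 z' = p * q := by
    have h1 : n2 z' = (c⁻¹)^2 * n2 z := by simp [hz', n2, Finset.mul_sum, mul_pow]
    rw [h1]
    have h2 : (c⁻¹)^2 = p / q := by rw [inv_pow, hc2]; field_simp
    rw [h2]
    have h3 : n2 z = q^2 := (Real.sq_sqrt (n2_nonneg z)).symm
    rw [h3]; field_simp
  have hdp : dp (A *ᵥ y') (A *ᵥ z') = dp (A *ᵥ y) (A *ᵥ z) := by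
    rw [hy', hz', mulVec_smul' A c y, mulVec_smul' A c⁻¹ z]
    unfold dp
    congr 1; ext j
    field_simp
  rw [hdp, hn2y', hn2z'] at hbase
  calc dp (A *ᵥ y) (A *ᵥ z) ≤ δ * (p*q + p*q)/2 := hbase
    _ = δ * (p * q) := by ring

/-! #### Restriction of a vector to an index set -/

def res {N : ℕ} (T : Finset (Fin N)) (z : Fin N → ℝ) : Fin N → ℝ :=
  fun i => if i ∈ T then z i else 0

lemma res_add_compl {N : ℕ} (T : Finset (Fin N)) (z : Fin N → ℝ) (i : Fin N) :
    res T z i + res Tᶜ z i = z i := by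
  unfold res
  by_cases h : i ∈ T <;> simp [h, Finset.mem_compl]

lemma res_supp {N : ℕ} (T : Finset (Fin N)) (z : Fin N → ℝ) :
    (univ.filter fun i => res T z i ≠ 0) ⊆ T := by
  intro i hi
  simp only [mem_filter, mem_univ, true_and, res] at hi
  by_contra h
  simp [h] at hi

lemma isSparse_res {N m : ℕ} {T : Finset (Fin N)} (z : Fin N → ℝ) (h : T.card ≤ m) :
    IsSparse m (res T z) :=
  le_trans (Finset.card_le_card (res_supp T z)) h

lemma n2_res_sum {N : ℕ} (T : Finset (Fin N)) (z : Fin N → ℝ) :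
    n2 (res T z) = ∑ i ∈ T, z i ^ 2 := by
  unfold n2
  rw [← Finset.sum_subset (Finset.subset_univ T)
    (fun i _ hiT => by simp [res, hiT])]
  exact Finset.sum_congr rfl fun i hi => by simp [res, hi]

lemma cols_mulVec {n N : ℕ} (A : Matrix (Fin n) (Fin N) ℝ) (T : Finset (Fin N))
    (z : Fin N → ℝ) : cols A T *ᵥ subv z T = A *ᵥ res T z := by
  ext j
  simp only [mulVec, dotProduct, cols, subv, res, of_apply]
  have h1 : ∑ x : { i // i ∈ T }, A j x.1 * z x.1 = ∑ i ∈ T, A j i * z i :=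
    Finset.sum_coe_sort T (fun i => A j i * z i)
  rw [h1]
  simp only [mul_ite, mul_zero]
  rw [Finset.sum_ite_mem]
  simp

lemma colsT_apply {n N : ℕ} (A : Matrix (Fin n) (Fin N) ℝ) (T : Finset (Fin N))
    (w : Fin n → ℝ) (i : Fin N) (hi : i ∈ T) :
    ((cols A T)ᵀ *ᵥ w) ⟨i, hi⟩ = (Aᵀ *ᵥ w) i := by
  simp [mulVec, dotProduct, cols, transpose_apply]

noncomputable def fbExt {n N : ℕ} (A : Matrix (Fin n) (Fin N) ℝ) (T : Finset (Fin N))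
    (xv : Fin N → ℝ) : Fin N → ℝ :=
  fun i => if h : i ∈ T then fb A T xv ⟨i, h⟩ else 0

lemma subv_fbExt {n N : ℕ} (A : Matrix (Fin n) (Fin N) ℝ) (T : Finset (Fin N))
    (xv : Fin N → ℝ) : subv (fbExt A T xv) T = fb A T xv := by
  funext i
  simp [subv, fbExt, i.2]

lemma res_fbExt {n N : ℕ} (A : Matrix (Fin n) (Fin N) ℝ) (T : Finset (Fin N))
    (xv : Fin N → ℝ) : res T (fbExt A T xv) = fbExt A T xv := by
  funext i
  unfold res fbExt
  by_cases h : i ∈ T <;> simp [h]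

lemma fb_eq {n N : ℕ} (A : Matrix (Fin n) (Fin N) ℝ) (T : Finset (Fin N))
    (xv : Fin N → ℝ) (hg : IsUnit ((cols A T)ᵀ * cols A T)) (i : Fin N) (hi : i ∈ T) :
    (Aᵀ *ᵥ (A *ᵥ fbExt A T xv)) i = (Aᵀ *ᵥ (A *ᵥ res Tᶜ xv)) i := by
  have hdet : IsUnit ((cols A T)ᵀ * cols A T).det :=
    (Matrix.isUnit_iff_isUnit_det _).mp hg
  have key : ((cols A T)ᵀ * cols A T) *ᵥ fb A T xv
      = (cols A T)ᵀ *ᵥ (cols A Tᶜ *ᵥ subv xv Tᶜ) := by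
    unfold fb
    rw [mulVec_mulVec, Matrix.mul_nonsing_inv _ hdet, one_mulVec]
  have lhs : (((cols A T)ᵀ * cols A T) *ᵥ fb A T xv) ⟨i, hi⟩
      = (Aᵀ *ᵥ (A *ᵥ fbExt A T xv)) i := by
    rw [← mulVec_mulVec, ← subv_fbExt A T xv, cols_mulVec, res_fbExt, colsT_apply]
  have rhs : ((cols A T)ᵀ *ᵥ (cols A Tᶜ *ᵥ subv xv Tᶜ)) ⟨i, hi⟩
      = (Aᵀ *ᵥ (A *ᵥ res Tᶜ xv)) i := by
    rw [cols_mulVec, colsT_apply]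
  rw [← lhs, ← rhs, key]

/-! #### The null-space projector -/

section Proj
variable {n N : ℕ} (A : Matrix (Fin n) (Fin N) ℝ)

noncomputable def Qm : Matrix (Fin N) (Fin N) ℝ := Aᵀ * (A * Aᵀ)⁻¹ * A
noncomputable def Pm : Matrix (Fin N) (Fin N) ℝ := 1 - Qm A

lemma hdet (hpd : (A * Aᵀ).PosDef) : IsUnit (A * Aᵀ).det :=
  isUnit_iff_ne_zero.mpr (ne_of_gt hpd.det_pos)

lemma AAT_symm : (A * Aᵀ)ᵀ = A * Aᵀ := by
  rw [transpose_mul, transpose_transpose]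

lemma Binv_symm : ((A * Aᵀ)⁻¹)ᵀ = (A * Aᵀ)⁻¹ := by
  rw [transpose_nonsing_inv, AAT_symm]

lemma Qm_symm : (Qm A)ᵀ = Qm A := by
  unfold Qm
  rw [transpose_mul, transpose_mul, transpose_transpose, Binv_symm, Matrix.mul_assoc]

lemma Qm_idem (hpd : (A * Aᵀ).PosDef) : Qm A * Qm A = Qm A := by
  unfold Qm
  have h1 : (A * Aᵀ) * (A * Aᵀ)⁻¹ = 1 := mul_nonsing_inv _ (hdet A hpd)
  calc Aᵀ * (A * Aᵀ)⁻¹ * A * (Aᵀ * (A * Aᵀ)⁻¹ * A)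
      = Aᵀ * (A * Aᵀ)⁻¹ * ((A * Aᵀ) * (A * Aᵀ)⁻¹) * A := by
        simp only [Matrix.mul_assoc]
    _ = Aᵀ * (A * Aᵀ)⁻¹ * A := by rw [h1, Matrix.mul_one]

lemma A_mul_Qm (hpd : (A * Aᵀ).PosDef) : A * Qm A = A := by
  unfold Qm
  have h1 : (A * Aᵀ) * (A * Aᵀ)⁻¹ = 1 := mul_nonsing_inv _ (hdet A hpd)
  calc A * (Aᵀ * (A * Aᵀ)⁻¹ * A) = ((A * Aᵀ) * (A * Aᵀ)⁻¹) * A := by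
        simp only [Matrix.mul_assoc]
    _ = A := by rw [h1, Matrix.one_mul]

lemma A_mul_Pm (hpd : (A * Aᵀ).PosDef) : A * Pm A = 0 := by
  unfold Pm
  rw [Matrix.mul_sub, Matrix.mul_one, A_mul_Qm A hpd, sub_self]

lemma Pm_symm : (Pm A)ᵀ = Pm A := by
  unfold Pm
  rw [transpose_sub, transpose_one, Qm_symm]

lemma Pm_mul_Qm (hpd : (A * Aᵀ).PosDef) : Pm A * Qm A = 0 := by
  unfold Pm
  rw [Matrix.sub_mul, Matrix.one_mul, Qm_idem A hpd, sub_self]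

lemma Pm_idem (hpd : (A * Aᵀ).PosDef) : Pm A * Pm A = Pm A := by
  conv_lhs => rw [Pm, Matrix.mul_sub, Matrix.mul_one, ← Pm]
  rw [Pm_mul_Qm A hpd, sub_zero]

lemma A_mulVec_Pm (hpd : (A * Aᵀ).PosDef) (v : Fin N → ℝ) : A *ᵥ (Pm A *ᵥ v) = 0 := by
  rw [mulVec_mulVec, A_mul_Pm A hpd, zero_mulVec]

lemma Pm_fix (v : Fin N → ℝ) (hv : A *ᵥ v = 0) : Pm A *ᵥ v = v := by
  unfold Pm Qm
  rw [sub_mulVec, one_mulVec, ← mulVec_mulVec, ← mulVec_mulVec, hv, mulVec_zero,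
    mulVec_zero, sub_zero]

lemma n2_add_full {k : ℕ} (x y : Fin k → ℝ) :
    n2 (fun i => x i + y i) = n2 x + 2 * dp x y + n2 y := by
  unfold n2 dp
  rw [Finset.mul_sum, ← Finset.sum_add_distrib, ← Finset.sum_add_distrib]
  congr 1; ext i; ring

lemma n2_decomp (hpd : (A * Aᵀ).PosDef) (z : Fin N → ℝ) :
    n2 z = n2 (Pm A *ᵥ z) + n2 (Qm A *ᵥ z) := by
  have hz : z = fun i => (Pm A *ᵥ z) i + (Qm A *ᵥ z) i := by
    funext i
    have h1 : Pm A *ᵥ z + Qm A *ᵥ z = (Pm A + Qm A) *ᵥ z := (add_mulVec _ _ _).symm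
    have h2 : Pm A + Qm A = 1 := by unfold Pm; abel
    have h3 : Pm A *ᵥ z + Qm A *ᵥ z = z := by rw [h1, h2, one_mulVec]
    have := congrFun h3 i
    simpa using this.symm
  have horth : dp (Pm A *ᵥ z) (Qm A *ᵥ z) = 0 := by
    rw [dp_mulVec, Pm_symm, mulVec_mulVec, Pm_mul_Qm A hpd, zero_mulVec]
    simp [dp]
  conv_lhs => rw [hz]
  rw [n2_add_full, horth]
  ring

lemma n2_Qm_eq (hpd : (A * Aᵀ).PosDef) (z : Fin N → ℝ) :
    n2 (Qm A *ᵥ z) = n2 ((psdSqrt hpd.posSemidef)⁻¹ *ᵥ (A *ᵥ z)) := by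
  set M := psdSqrt hpd.posSemidef with hM
  have hMsymm : Mᵀ = M := by
    rw [hM]; unfold psdSqrt
    simp only [star_eq_conjTranspose, conjTranspose_eq_transpose_of_trivial, transpose_mul,
      diagonal_transpose, transpose_transpose, Matrix.mul_assoc]
  have hMM : M * M = A * Aᵀ := by
    have hM' := hpd.posSemidef
    have hs := hM'.1.spectral_theorem
    have hu : (star hM'.1.eigenvectorUnitary : Matrix (Fin n) (Fin n) ℝ) *
        (hM'.1.eigenvectorUnitary : Matrix (Fin n) (Fin n) ℝ) = 1 :=
      Unitary.star_mul_self_of_mem hM'.1.eigenvectorUnitary.2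
    have hd : diagonal (fun i => Real.sqrt (hM'.1.eigenvalues i)) *
        diagonal (fun i => Real.sqrt (hM'.1.eigenvalues i)) =
        diagonal (fun i => hM'.1.eigenvalues i) := by
      rw [diagonal_mul_diagonal]; congr 1; funext i
      exact Real.mul_self_sqrt (hM'.eigenvalues_nonneg i)
    rw [hM]; unfold psdSqrt
    conv_rhs => rw [hs]
    calc _ = (hM'.1.eigenvectorUnitary : Matrix (Fin n) (Fin n) ℝ) *
          diagonal (fun i => Real.sqrt (hM'.1.eigenvalues i)) *
          ((star hM'.1.eigenvectorUnitary : Matrix (Fin n) (Fin n) ℝ) *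
            (hM'.1.eigenvectorUnitary : Matrix (Fin n) (Fin n) ℝ)) *
          diagonal (fun i => Real.sqrt (hM'.1.eigenvalues i)) *
          (star hM'.1.eigenvectorUnitary : Matrix (Fin n) (Fin n) ℝ) := by
          simp only [Matrix.mul_assoc]
      _ = _ := by
          rw [hu, Matrix.mul_one, Matrix.mul_assoc _ (diagonal _) (diagonal _), hd]; rfl
  have hMinv : M⁻¹ * M⁻¹ = (A * Aᵀ)⁻¹ := by
    rw [← hMM, Matrix.mul_inv_rev]
  have lhs : n2 (Qm A *ᵥ z) = dp (A *ᵥ z) ((A * Aᵀ)⁻¹ *ᵥ (A *ᵥ z)) := by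
    rw [← dp_self, dp_mulVec, Qm_symm, mulVec_mulVec, Qm_idem A hpd]
    unfold Qm
    rw [← mulVec_mulVec, dp_comm, dp_mulVec, transpose_mul, transpose_transpose,
      Binv_symm, ← mulVec_mulVec]
  have rhs : n2 (M⁻¹ *ᵥ (A *ᵥ z)) = dp (A *ᵥ z) ((A * Aᵀ)⁻¹ *ᵥ (A *ᵥ z)) := by
    rw [← dp_self, dp_mulVec, transpose_nonsing_inv, hMsymm, mulVec_mulVec, hMinv]
  rw [lhs, rhs]

end Proj

lemma exists_injOn_finset {α : Type*} [DecidableEq α] {s t : Finset α} (h : s.card ≤ t.card) :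
    ∃ f : α → α, (∀ a ∈ s, f a ∈ t) ∧ Set.InjOn f s := by
  classical
  obtain ⟨t', ht's, ht'c⟩ := Finset.exists_subset_card_eq h
  have hcard : Fintype.card s = Fintype.card t' := by
    simp [Fintype.card_coe, ht'c]
  let e := Fintype.equivOfCardEq hcard
  refine ⟨fun a => if h : a ∈ s then (e ⟨a, h⟩ : α) else a, ?_, ?_⟩
  · intro a ha
    simp only [dif_pos ha]
    exact ht's (e ⟨a, ha⟩).2
  · intro a ha b hb hab
    simp only [Finset.mem_coe] at ha hb
    simp only [dif_pos ha, dif_pos hb] at hab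
    have := e.injective (Subtype.ext hab)
    exact congrArg Subtype.val this

end S8

set_option maxHeartbeats 1000000

/-- NST+HT+FB recovers an exactly sparse solution in finitely many steps. -/
theorem stmt_8 {n N s : ℕ} (hnN : n < N) (A : Matrix (Fin n) (Fin N) ℝ)
    (hpd : (A * Aᵀ).PosDef)
    (x : Fin N → ℝ) (hx : IsSparse s x) (b : Fin n → ℝ) (hb : A *ᵥ x = b)
    (δ₂ γ : ℝ) (hδ₂0 : 0 ≤ δ₂) (hγ0 : 0 ≤ γ)
    (hRIP2 : ∀ z : Fin N → ℝ, IsSparse (2*s) z →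
      (1 - δ₂) * euclNorm z ^ 2 ≤ euclNorm (A *ᵥ z) ^ 2 ∧
        euclNorm (A *ᵥ z) ^ 2 ≤ (1 + δ₂) * euclNorm z ^ 2)
    (hPRIP : ∀ z : Fin N → ℝ, IsSparse (3*s) z →
      (1 - γ) * euclNorm z ^ 2 ≤ euclNorm ((psdSqrt hpd.posSemidef)⁻¹ *ᵥ (A *ᵥ z)) ^ 2)
    (hcond : δ₂ + Real.sqrt 2 * γ < 1)
    (xk u : ℕ → Fin N → ℝ) (Tk : ℕ → Finset (Fin N))
    (hTkcard : ∀ k, (Tk k).card = s)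
    (hTkmax : ∀ k, ∀ i ∈ Tk k, ∀ j ∉ Tk k, |xk k j| ≤ |xk k i|)
    (hginv : ∀ k, IsUnit ((cols A (Tk k))ᵀ * cols A (Tk k)))
    (hu1 : ∀ k, ∀ i, ∀ hi : i ∈ Tk k, u k i = xk k i + fb A (Tk k) (xk k) ⟨i, hi⟩)
    (hu2 : ∀ k, ∀ i ∉ Tk k, u k i = 0)
    (hxk : ∀ k, xk (k+1) = xk k + (1 - Aᵀ * (A * Aᵀ)⁻¹ * A) *ᵥ (u k - xk k))
    (hx0 : A *ᵥ xk 0 = b) :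
    ∃ K, ∀ k, K ≤ k → u k = x := by
  classical
  -- rephrase RIP hypotheses in terms of `n2`
  have hRIP : ∀ z : Fin N → ℝ, IsSparse (2*s) z →
      (1 - δ₂) * S8.n2 z ≤ S8.n2 (A *ᵥ z) ∧ S8.n2 (A *ᵥ z) ≤ (1 + δ₂) * S8.n2 z := by
    intro z hz
    have := hRIP2 z hz
    rwa [S8.enorm_sq, S8.enorm_sq] at this
  have hδ1 : δ₂ < 1 := by
    have : 0 ≤ Real.sqrt 2 * γ := by positivity
    linarith
  have h1δ : (0:ℝ) < 1 - δ₂ := by linarith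
  -- P-RIP consequence : P contracts sparse vectors
  have hPcon : ∀ z : Fin N → ℝ, IsSparse (3*s) z →
      S8.n2 (S8.Pm A *ᵥ z) ≤ γ * S8.n2 z := by
    intro z hz
    have h1 := hPRIP z hz
    rw [S8.enorm_sq, S8.enorm_sq, ← S8.n2_Qm_eq A hpd z] at h1
    have h2 := S8.n2_decomp A hpd z
    linarith
  -- the iterates always satisfy the constraint
  have hPmdef : (1 - Aᵀ * (A * Aᵀ)⁻¹ * A) = S8.Pm A := rfl
  have hAxk : ∀ k, A *ᵥ xk k = b := by
    intro k
    induction k with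
    | zero => exact hx0
    | succ k ih =>
      rw [hxk k, hPmdef, mulVec_add, S8.A_mulVec_Pm A hpd, add_zero, ih]
  -- main objects
  set S : Finset (Fin N) := univ.filter (fun i => x i ≠ 0) with hSdef
  have hScard : S.card ≤ s := hx
  set xTc : ℕ → Fin N → ℝ := fun k => S8.res (Tk k)ᶜ x with hxTcdef
  set a2 : ℕ → ℝ := fun k => S8.n2 (xTc k) with ha2def
  set wv : ℕ → Fin N → ℝ := fun k i => u k i - x i with hwvdef
  set hv : ℕ → Fin N → ℝ := fun k => S8.res (Tk k) (wv k) with hhvdef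
  have ha2nn : ∀ k, 0 ≤ a2 k := fun k => S8.n2_nonneg _
  have hxTc0 : ∀ k i, i ∈ Tk k → xTc k i = 0 := by
    intro k i hi
    simp [hxTcdef, S8.res, Finset.mem_compl, hi]
  have hxTc1 : ∀ k i, i ∉ Tk k → xTc k i = x i := by
    intro k i hi
    simp [hxTcdef, S8.res, Finset.mem_compl, hi]
  have hw_eq : ∀ k i, wv k i = hv k i - xTc k i := by
    intro k i
    by_cases hi : i ∈ Tk k
    · rw [hxTc0 k i hi]
      simp [hhvdef, S8.res, hi]
    · rw [hxTc1 k i hi]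
      simp only [hhvdef, S8.res, if_neg hi]
      rw [hwvdef]
      simp [hu2 k i hi]
  have hdisj : ∀ k i, hv k i = 0 ∨ xTc k i = 0 := by
    intro k i
    by_cases hi : i ∈ Tk k
    · exact Or.inr (hxTc0 k i hi)
    · exact Or.inl (by simp [hhvdef, S8.res, hi])
  have hn2w : ∀ k, S8.n2 (wv k) = S8.n2 (hv k) + S8.n2 (xTc k) := by
    intro k
    have h1 : wv k = fun i => hv k i - xTc k i := funext (hw_eq k)
    rw [h1, S8.n2_sub_of_disj (hdisj k)]
  -- support cardinality facts
  have hhv_supp : ∀ k, (univ.filter fun i => hv k i ≠ 0) ⊆ Tk k := fun k =>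
    S8.res_supp (Tk k) (wv k)
  have hxTc_supp : ∀ k, (univ.filter fun i => xTc k i ≠ 0) ⊆ S := by
    intro k i hi
    simp only [mem_filter, mem_univ, true_and, hxTcdef, S8.res, hSdef] at hi ⊢
    by_cases h : i ∈ (Tk k)ᶜ
    · simpa [h] using hi
    · simp [h] at hi
  have hcardU : ∀ k, ((univ.filter fun i => hv k i ≠ 0)
      ∪ (univ.filter fun i => xTc k i ≠ 0)).card ≤ 2*s := by
    intro k
    calc ((univ.filter fun i => hv k i ≠ 0) ∪ (univ.filter fun i => xTc k i ≠ 0)).card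
        ≤ (univ.filter fun i => hv k i ≠ 0).card + (univ.filter fun i => xTc k i ≠ 0).card :=
          Finset.card_union_le _ _
      _ ≤ s + s := by
          gcongr
          · exact le_trans (Finset.card_le_card (hhv_supp k)) (le_of_eq (hTkcard k))
          · exact le_trans (Finset.card_le_card (hxTc_supp k)) hScard
      _ = 2*s := by ring
  have hhv_sp : ∀ k, IsSparse (2*s) (hv k) := by
    intro k
    refine le_trans (Finset.card_le_card (hhv_supp k)) ?_
    rw [hTkcard k]; omega
  -- the key algebraic identity for the feedback step
  have hkey : ∀ k, ∀ i ∈ Tk k, (Aᵀ *ᵥ (A *ᵥ hv k)) i = (Aᵀ *ᵥ (A *ᵥ xTc k)) i := by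
    intro k i hi
    have hvdecomp : hv k = (S8.res (Tk k) (xk k) + S8.fbExt A (Tk k) (xk k))
        - S8.res (Tk k) x := by
      funext j
      simp only [Pi.sub_apply, Pi.add_apply]
      by_cases hj : j ∈ Tk k
      · simp only [hhvdef, hwvdef, S8.res, S8.fbExt, if_pos hj, dif_pos hj]
        rw [hu1 k j hj]
      · simp [hhvdef, hwvdef, S8.res, S8.fbExt, hj]
    have hAv : Aᵀ *ᵥ (A *ᵥ hv k)
        = Aᵀ *ᵥ (A *ᵥ S8.res (Tk k) (xk k)) + Aᵀ *ᵥ (A *ᵥ S8.fbExt A (Tk k) (xk k))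
          - Aᵀ *ᵥ (A *ᵥ S8.res (Tk k) x) := by
      rw [hvdecomp]
      simp only [mulVec_sub, mulVec_add]
    have hsum1 : Aᵀ *ᵥ (A *ᵥ S8.res (Tk k) (xk k)) + Aᵀ *ᵥ (A *ᵥ S8.res (Tk k)ᶜ (xk k))
        = Aᵀ *ᵥ (A *ᵥ xk k) := by
      have hpq : S8.res (Tk k) (xk k) + S8.res (Tk k)ᶜ (xk k) = xk k :=
        funext (S8.res_add_compl (Tk k) (xk k))
      rw [← mulVec_add, ← mulVec_add, hpq]
    have hsum2 : Aᵀ *ᵥ (A *ᵥ S8.res (Tk k) x) + Aᵀ *ᵥ (A *ᵥ S8.res (Tk k)ᶜ x)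
        = Aᵀ *ᵥ (A *ᵥ x) := by
      have hpq : S8.res (Tk k) x + S8.res (Tk k)ᶜ x = x :=
        funext (S8.res_add_compl (Tk k) x)
      rw [← mulVec_add, ← mulVec_add, hpq]
    have hbx : Aᵀ *ᵥ (A *ᵥ xk k) = Aᵀ *ᵥ (A *ᵥ x) := by rw [hAxk k, hb]
    have hfb := S8.fb_eq A (Tk k) (xk k) (hginv k) i hi
    have e1 := congrFun hAv i
    have e2 := congrFun hsum1 i
    have e3 := congrFun hsum2 i
    have e4 := congrFun hbx i
    simp only [Pi.add_apply, Pi.sub_apply] at e1 e2 e3 e4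
    have hxTcx : S8.res (Tk k)ᶜ x = xTc k := rfl
    rw [hxTcx] at e3
    rw [e1, hfb]
    linarith
  -- norm bound on the feedback part
  have hn2Ah : ∀ k, S8.n2 (A *ᵥ hv k) = S8.dp (A *ᵥ hv k) (A *ᵥ xTc k) := by
    intro k
    rw [← S8.dp_self, S8.dp_mulVec, S8.dp_mulVec]
    unfold S8.dp
    refine Finset.sum_congr rfl fun i _ => ?_
    by_cases hi : i ∈ Tk k
    · rw [hkey k i hi]
    · have h0 : hv k i = 0 := by simp [hhvdef, S8.res, hi]
      rw [h0, zero_mul, zero_mul]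
  have keyA : ∀ k, (1-δ₂)^2 * S8.n2 (wv k) ≤ a2 k := by
    intro k
    have hrip := (hRIP (hv k) (hhv_sp k)).1
    have hcr := S8.cross A δ₂ hδ₂0 hRIP (hv k) (xTc k) (hdisj k) (hcardU k)
    rw [← hn2Ah k] at hcr
    set α := Real.sqrt (S8.n2 (hv k)) with hα
    set β := Real.sqrt (a2 k) with hβ
    have hα0 : 0 ≤ α := Real.sqrt_nonneg _
    have hβ0 : 0 ≤ β := Real.sqrt_nonneg _
    have hα2 : S8.n2 (hv k) = α^2 := (Real.sq_sqrt (S8.n2_nonneg _)).symm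
    have hβ2 : a2 k = β^2 := (Real.sq_sqrt (ha2nn k)).symm
    have hineq : (1-δ₂) * α^2 ≤ δ₂ * (α*β) := by
      rw [← hα2]
      calc (1-δ₂) * S8.n2 (hv k) ≤ S8.n2 (A *ᵥ hv k) := hrip
        _ ≤ δ₂ * (α*β) := hcr
    have hha : (1-δ₂)^2 * S8.n2 (hv k) ≤ δ₂^2 * a2 k := by
      rw [hα2, hβ2]
      rcases eq_or_lt_of_le hα0 with h0 | h0
      · rw [← h0]
        have : (0:ℝ)^2 = 0 := by norm_num
        rw [this, mul_zero]
        positivity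
      · have hd : (1-δ₂) * α ≤ δ₂ * β := by
          have := hineq
          nlinarith
        nlinarith [mul_nonneg hδ₂0 hβ0, mul_nonneg (le_of_lt h1δ) hα0]
    rw [hn2w k]
    have hxa : S8.n2 (xTc k) = a2 k := rfl
    rw [hxa]
    nlinarith [ha2nn k, S8.n2_nonneg (hv k), hha,
      mul_nonneg (mul_nonneg hδ₂0 (le_of_lt h1δ)) (ha2nn k)]
  -- if `a2 k = 0` then the iterate has converged
  have hufin : ∀ k, a2 k = 0 → u k = x := by
    intro k hk
    have h1 := keyA k
    rw [hk] at h1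
    have h2 : S8.n2 (wv k) ≤ 0 := by nlinarith [S8.n2_nonneg (wv k), pow_pos h1δ 2]
    have h3 : S8.n2 (wv k) = 0 := le_antisymm h2 (S8.n2_nonneg _)
    funext i
    have := S8.n2_eq_zero h3 i
    simp only [hwvdef] at this
    linarith
  -- sparsity of the error vector `wv k`
  have hwv_sp : ∀ k, IsSparse (3*s) (wv k) := by
    intro k
    have hsupp : (univ.filter fun i => wv k i ≠ 0) ⊆ Tk k ∪ S := by
      intro i hi
      simp only [mem_filter, mem_univ, true_and, hwvdef] at hi
      rw [Finset.mem_union]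
      by_cases h : i ∈ Tk k
      · exact Or.inl h
      · refine Or.inr ?_
        rw [hSdef, mem_filter]
        refine ⟨mem_univ i, ?_⟩
        intro h0
        rw [hu2 k i h, h0] at hi
        simp at hi
    calc (univ.filter fun i => wv k i ≠ 0).card ≤ (Tk k ∪ S).card :=
          Finset.card_le_card hsupp
      _ ≤ (Tk k).card + S.card := Finset.card_union_le _ _
      _ ≤ 3*s := by rw [hTkcard k]; omega
  -- the contraction step
  have keyC : ∀ k, a2 (k+1) ≤ 2 * γ^2 * S8.n2 (wv k) := by
    intro k
    set T' := Tk (k+1) with hT'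
    set Sd := S \ T' with hSd
    set Td := T' \ S with hTd
    have hcardST : Sd.card ≤ Td.card := by
      have h1 := Finset.card_sdiff_add_card_inter S T'
      have h2 := Finset.card_sdiff_add_card_inter T' S
      rw [Finset.inter_comm] at h1
      rw [← hSd] at h1
      rw [← hTd] at h2
      have h3 : T'.card = s := hTkcard (k+1)
      omega
    obtain ⟨f, hf1, hf2⟩ := S8.exists_injOn_finset hcardST
    set ev : Fin N → ℝ := S8.Pm A *ᵥ wv k with hev
    -- the error identity
    have he : ∀ i, xk (k+1) i - x i = ev i := by
      have hst : xk (k+1) = xk k + S8.Pm A *ᵥ (u k - xk k) := by rw [hxk k, hPmdef]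
      have hsplit : u k - xk k = wv k + (x - xk k) := by
        funext i
        simp only [Pi.add_apply, Pi.sub_apply, hwvdef]
        ring
      have hfix : S8.Pm A *ᵥ (x - xk k) = x - xk k :=
        S8.Pm_fix A _ (by rw [mulVec_sub, hb, hAxk k, sub_self])
      have hfull : xk (k+1) = xk k + (S8.Pm A *ᵥ wv k + (x - xk k)) := by
        rw [hst, hsplit, mulVec_add, hfix]
      intro i
      have := congrFun hfull i
      simp only [Pi.add_apply, Pi.sub_apply] at this
      rw [this, hev]
      ring
    -- rewrite `a2 (k+1)` as a sum over `Sd`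
    have ha2S : a2 (k+1) = ∑ j ∈ Sd, x j ^ 2 := by
      show S8.n2 (S8.res T'ᶜ x) = ∑ j ∈ Sd, x j ^ 2
      rw [S8.n2_res_sum]
      rw [← Finset.sum_subset (show Sd ⊆ T'ᶜ by
        intro j hj
        rw [Finset.mem_compl]
        exact (Finset.mem_sdiff.mp hj).2)]
      intro i hiTc hiSd
      have hiT : i ∉ T' := Finset.mem_compl.mp hiTc
      have hiS : i ∉ S := by
        intro hiS
        exact hiSd (Finset.mem_sdiff.mpr ⟨hiS, hiT⟩)
      have : x i = 0 := by
        by_contra h0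
        exact hiS (by rw [hSdef, mem_filter]; exact ⟨mem_univ i, h0⟩)
      rw [this]
      norm_num
    -- entrywise bound via the hard-thresholding property
    have hentry : ∀ j ∈ Sd, x j ^ 2 ≤ 2 * ev j ^ 2 + 2 * ev (f j) ^ 2 := by
      intro j hj
      have hjS : j ∈ S := (Finset.mem_sdiff.mp hj).1
      have hjT : j ∉ T' := (Finset.mem_sdiff.mp hj).2
      have hfj := hf1 j hj
      have hfjT : f j ∈ T' := (Finset.mem_sdiff.mp hfj).1
      have hfjS : f j ∉ S := (Finset.mem_sdiff.mp hfj).2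
      have hxfj : x (f j) = 0 := by
        by_contra h0
        exact hfjS (by rw [hSdef, mem_filter]; exact ⟨mem_univ _, h0⟩)
      have habs1 : |xk (k+1) j| ≤ |xk (k+1) (f j)| := hTkmax (k+1) (f j) hfjT j hjT
      have hej := he j
      have hefj := he (f j)
      rw [hxfj] at hefj
      have h1 : |x j| ≤ |ev j| + |ev (f j)| := by
        calc |x j| = |xk (k+1) j - ev j| := by rw [← hej]; congr 1; ring
          _ ≤ |xk (k+1) j| + |ev j| := abs_sub _ _
          _ ≤ |xk (k+1) (f j)| + |ev j| := by linarith
          _ = |ev (f j)| + |ev j| := by rw [show xk (k+1) (f j) = ev (f j) by linarith]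
          _ = |ev j| + |ev (f j)| := by ring
      have h2 : (0:ℝ) ≤ |x j| := abs_nonneg _
      have h3 := mul_self_le_mul_self h2 h1
      nlinarith [sq_abs (x j), sq_abs (ev j), sq_abs (ev (f j)),
        sq_nonneg (|ev j| - |ev (f j)|)]
    -- sum the entrywise bounds
    have hdisjST : Disjoint Sd Td := by
      rw [Finset.disjoint_left]
      intro i hiSd hiTd
      exact (Finset.mem_sdiff.mp hiSd).2 (Finset.mem_sdiff.mp hiTd).1
    set Ω := Sd ∪ Td with hΩ
    have hsum : a2 (k+1) ≤ 2 * S8.n2 (S8.res Ω ev) := by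
      rw [ha2S, S8.n2_res_sum, hΩ, Finset.sum_union hdisjST]
      have hs1 : ∑ j ∈ Sd, x j ^ 2 ≤ ∑ j ∈ Sd, (2 * ev j ^ 2 + 2 * ev (f j) ^ 2) :=
        Finset.sum_le_sum hentry
      have hs2 : ∑ j ∈ Sd, ev (f j) ^ 2 ≤ ∑ i ∈ Td, ev i ^ 2 := by
        have himg : ∑ i ∈ Sd.image f, ev i ^ 2 = ∑ j ∈ Sd, ev (f j) ^ 2 :=
          Finset.sum_image (fun a ha b hb hab => hf2 ha hb hab)
        rw [← himg]
        refine Finset.sum_le_sum_of_subset_of_nonneg ?_ (fun i _ _ => sq_nonneg _)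
        intro i hi
        obtain ⟨j, hj, rfl⟩ := Finset.mem_image.mp hi
        exact hf1 j hj
      have hs3 : ∑ j ∈ Sd, (2 * ev j ^ 2 + 2 * ev (f j) ^ 2)
          = 2 * ∑ j ∈ Sd, ev j ^ 2 + 2 * ∑ j ∈ Sd, ev (f j) ^ 2 := by
        rw [Finset.sum_add_distrib, Finset.mul_sum, Finset.mul_sum]
      linarith
    -- bound the restricted projected error via the P-RIP
    set v := S8.res Ω ev with hvdef2
    have hΩcard : Ω.card ≤ 3*s := by
      calc Ω.card ≤ Sd.card + Td.card := Finset.card_union_le _ _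
        _ ≤ s + s := by
            gcongr
            · calc Sd.card ≤ S.card := Finset.card_le_card Finset.sdiff_subset
                _ ≤ s := hScard
            · calc Td.card ≤ T'.card := Finset.card_le_card Finset.sdiff_subset
                _ = s := hTkcard (k+1)
        _ ≤ 3*s := by omega
    have hv_sp3 : IsSparse (3*s) v := S8.isSparse_res ev hΩcard
    have hn2v_dp : S8.n2 v = S8.dp ev v := by
      unfold S8.n2 S8.dp
      refine Finset.sum_congr rfl fun i _ => ?_
      by_cases hi : i ∈ Ω
      · simp [hvdef2, S8.res, hi]; ring
      · simp [hvdef2, S8.res, hi]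
    have hdpPP : S8.dp ev v = S8.dp (S8.Pm A *ᵥ wv k) (S8.Pm A *ᵥ v) := by
      rw [hev, S8.dp_mulVec, S8.dp_mulVec, S8.Pm_symm, mulVec_mulVec,
        S8.Pm_idem A hpd]
    have hcs := S8.cs (S8.Pm A *ᵥ wv k) (S8.Pm A *ᵥ v)
    have hc1 : S8.n2 (S8.Pm A *ᵥ wv k) ≤ γ * S8.n2 (wv k) := hPcon _ (hwv_sp k)
    have hc2 : S8.n2 (S8.Pm A *ᵥ v) ≤ γ * S8.n2 v := hPcon _ hv_sp3
    have hsq1 : Real.sqrt (S8.n2 (S8.Pm A *ᵥ wv k))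
        ≤ Real.sqrt γ * Real.sqrt (S8.n2 (wv k)) := by
      rw [← Real.sqrt_mul hγ0]
      exact Real.sqrt_le_sqrt hc1
    have hsq2 : Real.sqrt (S8.n2 (S8.Pm A *ᵥ v))
        ≤ Real.sqrt γ * Real.sqrt (S8.n2 v) := by
      rw [← Real.sqrt_mul hγ0]
      exact Real.sqrt_le_sqrt hc2
    have hmain : S8.n2 v ≤ γ * (Real.sqrt (S8.n2 (wv k)) * Real.sqrt (S8.n2 v)) := by
      have hγγ : Real.sqrt γ * Real.sqrt γ = γ := Real.mul_self_sqrt hγ0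
      calc S8.n2 v = S8.dp ev v := hn2v_dp
        _ = S8.dp (S8.Pm A *ᵥ wv k) (S8.Pm A *ᵥ v) := hdpPP
        _ ≤ Real.sqrt (S8.n2 (S8.Pm A *ᵥ wv k)) * Real.sqrt (S8.n2 (S8.Pm A *ᵥ v)) := hcs
        _ ≤ (Real.sqrt γ * Real.sqrt (S8.n2 (wv k))) * (Real.sqrt γ * Real.sqrt (S8.n2 v)) := by
            apply mul_le_mul hsq1 hsq2 (Real.sqrt_nonneg _)
            positivity
        _ = (Real.sqrt γ * Real.sqrt γ) * (Real.sqrt (S8.n2 (wv k)) * Real.sqrt (S8.n2 v)) := by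
            ring
        _ = γ * (Real.sqrt (S8.n2 (wv k)) * Real.sqrt (S8.n2 v)) := by rw [hγγ]
    have hn2vb : S8.n2 v ≤ γ^2 * S8.n2 (wv k) := by
      set β := Real.sqrt (S8.n2 v) with hβ
      set B := Real.sqrt (S8.n2 (wv k)) with hB
      have hβ0 : 0 ≤ β := Real.sqrt_nonneg _
      have hB0 : 0 ≤ B := Real.sqrt_nonneg _
      have hβ2 : S8.n2 v = β^2 := (Real.sq_sqrt (S8.n2_nonneg _)).symm
      have hB2 : S8.n2 (wv k) = B^2 := (Real.sq_sqrt (S8.n2_nonneg _)).symm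
      rw [hβ2, hB2]
      rw [hβ2] at hmain
      rcases eq_or_lt_of_le hβ0 with h0 | h0
      · rw [← h0]; nlinarith [sq_nonneg (γ*B)]
      · have hd : β ≤ γ * B := by nlinarith
        nlinarith [mul_nonneg hγ0 hB0]
    calc a2 (k+1) ≤ 2 * S8.n2 v := hsum
      _ ≤ 2 * (γ^2 * S8.n2 (wv k)) := by linarith
      _ = 2 * γ^2 * S8.n2 (wv k) := by ring
  -- geometric decay
  have h2γ : 2*γ^2 < (1-δ₂)^2 := by
    have h1 : Real.sqrt 2 * γ < 1 - δ₂ := by linarith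
    have h2 : (Real.sqrt 2 * γ)^2 < (1-δ₂)^2 := by
      apply pow_lt_pow_left₀ h1 (by positivity) two_ne_zero
    rwa [mul_pow, Real.sq_sqrt (by norm_num : (0:ℝ) ≤ 2)] at h2
  set q : ℝ := 2*γ^2/(1-δ₂)^2 with hqdef
  have hq0 : 0 ≤ q := by positivity
  have hq1 : q < 1 := (div_lt_one (by positivity)).mpr h2γ
  have hstep : ∀ k, a2 (k+1) ≤ q * a2 k := by
    intro k
    have h1 := keyC k
    have h2 := keyA k
    rw [hqdef, div_mul_eq_mul_div, le_div_iff₀ (by positivity)]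
    nlinarith [mul_le_mul_of_nonneg_right h1 (sq_nonneg (1-δ₂)),
      mul_le_mul_of_nonneg_left h2 (by positivity : (0:ℝ) ≤ 2*γ^2)]
  have hgeo : ∀ k, a2 k ≤ q^k * a2 0 := by
    intro k
    induction k with
    | zero => simp
    | succ k ih =>
      calc a2 (k+1) ≤ q * a2 k := hstep k
        _ ≤ q * (q^k * a2 0) := mul_le_mul_of_nonneg_left ih hq0
        _ = q^(k+1) * a2 0 := by ring
  have ha2res : ∀ k, a2 k = S8.n2 (S8.res (Tk k)ᶜ x) := fun k => rfl
  by_cases hSne : S.Nonempty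
  · set μ := (S.image fun i => x i ^ 2).min' (hSne.image _) with hμ
    have hμpos : 0 < μ := by
      obtain ⟨i, hiS, hie⟩ :=
        Finset.mem_image.mp ((S.image fun i => x i ^ 2).min'_mem (hSne.image _))
      rw [hμ, ← hie]
      have hne : x i ≠ 0 := by
        rw [hSdef] at hiS
        exact (mem_filter.mp hiS).2
      exact pow_two_pos_of_ne_zero hne
    have hmain : ∀ k, a2 k < μ → a2 k = 0 := by
      intro k hk
      by_contra h0
      have hex : ∃ i, S8.res (Tk k)ᶜ x i ≠ 0 := by
        by_contra hall
        push_neg at hall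
        apply h0
        rw [ha2res k]
        unfold S8.n2
        apply Finset.sum_eq_zero
        intro i _
        rw [hall i]
        norm_num
      obtain ⟨i, hi⟩ := hex
      have hiT : i ∉ Tk k := by
        intro hiT
        exact hi (by simp [S8.res, Finset.mem_compl, hiT])
      have hix : x i ≠ 0 := by
        simpa [S8.res, Finset.mem_compl, hiT] using hi
      have hiS : i ∈ S := by
        rw [hSdef]
        exact mem_filter.mpr ⟨mem_univ _, hix⟩
      have hμle : μ ≤ x i ^ 2 := Finset.min'_le _ _ (Finset.mem_image_of_mem _ hiS)
      have hterm : x i ^ 2 ≤ a2 k := by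
        rw [ha2res k]
        unfold S8.n2
        have hri : S8.res (Tk k)ᶜ x i = x i := by
          simp [S8.res, Finset.mem_compl, hiT]
        calc x i ^ 2 = (S8.res (Tk k)ᶜ x i)^2 := by rw [hri]
          _ ≤ ∑ j, (S8.res (Tk k)ᶜ x j)^2 :=
            Finset.single_le_sum (f := fun j => (S8.res (Tk k)ᶜ x j)^2)
              (fun j _ => sq_nonneg _) (mem_univ i)
      linarith
    obtain ⟨K, hK⟩ := exists_pow_lt_of_lt_one
      (div_pos hμpos (by nlinarith [ha2nn 0] : (0:ℝ) < a2 0 + 1)) hq1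
    refine ⟨K, fun k hk => ?_⟩
    apply hufin
    apply hmain
    have h1 : a2 k ≤ q^k * a2 0 := hgeo k
    have h2 : q^k ≤ q^K := pow_le_pow_of_le_one hq0 hq1.le hk
    have h3 : q^K * a2 0 < μ := by
      have h5 : q^K * (a2 0 + 1) < μ := by
        rw [← lt_div_iff₀ (by nlinarith [ha2nn 0] : (0:ℝ) < a2 0 + 1)]
        exact hK
      nlinarith [ha2nn 0, pow_nonneg hq0 K]
    calc a2 k ≤ q^k * a2 0 := h1
      _ ≤ q^K * a2 0 := by nlinarith [ha2nn 0]
      _ < μ := h3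
  · have hx0' : ∀ i, x i = 0 := by
      intro i
      by_contra h0
      exact hSne ⟨i, by rw [hSdef]; exact mem_filter.mpr ⟨mem_univ _, h0⟩⟩
    refine ⟨0, fun k _ => ?_⟩
    apply hufin
    rw [ha2res k]
    unfold S8.n2
    apply Finset.sum_eq_zero
    intro i _
    simp [S8.res, hx0' i]
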